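/- For every n ≥ 1, the fourth central moment of the Gepner statistic over W(n,n,n) equals n⁷(21n − 16)/80; that is, (1/|W(n,n,n)|) Σ_{w ∈ W(n,n,n)} (gep(w) − n³/2)⁴ = n⁷(21n − 16)/80 (as an identity in ℚ). -/

import Mathlib

/-- The Gepner statistic of a word `w` over a totally ordered alphabet:
the number of triples of positions `i < j < k` such that `w_i w_j w_k`
reduces to one of the odd permutations `132`, `213`, `321`. -/
def gep {α : Type*} [LinearOrder α] (w : List α) : ℕ :=
  (Finset.univ.filter (fun t : Fin w.length × Fin w.length × Fin w.length =>
    t.1 < t.2.1 ∧ t.2.1 < t.2.2 ∧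
      ((w.get t.1 < w.get t.2.2 ∧ w.get t.2.2 < w.get t.2.1) ∨
       (w.get t.2.1 < w.get t.1 ∧ w.get t.1 < w.get t.2.2) ∨
       (w.get t.2.2 < w.get t.2.1 ∧ w.get t.2.1 < w.get t.1)))).card

/-- `W a1 a2 a3` is the (finite) set of words over the alphabet `{1,2,3}`
with exactly `a1` occurrences of `1`, `a2` occurrences of `2` and
`a3` occurrences of `3`. -/
def W (a1 a2 a3 : ℕ) : Finset (List ℕ) :=
  ((List.replicate a1 1 ++ List.replicate a2 2 ++ List.replicate a3 3).permutations).toFinset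

set_option maxHeartbeats 1000000

namespace GepAux

def pcnt (Q : ℕ → ℕ → Prop) [DecidableRel Q] : List ℕ → ℕ
  | [] => 0
  | y :: w => (w.countP fun z => decide (Q y z)) + pcnt Q w

def tcnt (R : ℕ → ℕ → ℕ → Prop) [∀ x, DecidableRel (R x)] : List ℕ → ℕ
  | [] => 0
  | x :: w => pcnt (R x) w + tcnt R w

lemma countP_eq_sum (p : ℕ → Bool) (w : List ℕ) :
    (w.countP p : ℕ) = ∑ j : Fin w.length, if p (w.get j) then 1 else 0 := by
  induction w with
  | nil => simp
  | cons x w ih =>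
    rw [List.countP_cons]
    simp only [List.length_cons, Fin.sum_univ_succ, List.get_eq_getElem, Fin.val_succ,
      Fin.val_zero, List.getElem_cons_zero, List.getElem_cons_succ]
    simp only [List.get_eq_getElem] at ih
    rw [ih]; exact (add_comm _ _).trans (by congr 1)

lemma sum_pairs (Q : ℕ → ℕ → Prop) [DecidableRel Q] (w : List ℕ) :
    (∑ t : Fin w.length × Fin w.length,
      if t.1 < t.2 ∧ Q (w.get t.1) (w.get t.2) then 1 else 0) = pcnt Q w := by
  induction w with
  | nil => simp [pcnt]
  | cons x w ih =>
    rw [Fintype.sum_prod_type]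
    rw [Fintype.sum_prod_type] at ih
    rw [pcnt, countP_eq_sum]
    simp only [List.length_cons, Fin.sum_univ_succ, List.get_eq_getElem, Fin.val_succ,
      Fin.val_zero, List.getElem_cons_zero, List.getElem_cons_succ,
      lt_self_iff_false, Fin.not_lt_zero, Fin.succ_pos, Fin.succ_lt_succ_iff,
      false_and, true_and, if_false, Finset.sum_const_zero, add_zero, zero_add,
      decide_eq_true_eq]
    simp only [List.get_eq_getElem] at ih
    omega

lemma sum_trips (R : ℕ → ℕ → ℕ → Prop) [∀ x, DecidableRel (R x)] (w : List ℕ) :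
    (∑ t : Fin w.length × Fin w.length × Fin w.length,
      if t.1 < t.2.1 ∧ t.2.1 < t.2.2 ∧ R (w.get t.1) (w.get t.2.1) (w.get t.2.2)
      then 1 else 0) = tcnt R w := by
  induction w with
  | nil => simp [tcnt]
  | cons x w ih =>
    rw [Fintype.sum_prod_type]
    simp only [Fintype.sum_prod_type] at ih
    rw [tcnt, ← sum_pairs (R x) w, Fintype.sum_prod_type]
    simp only [Fintype.sum_prod_type]
    simp only [List.length_cons, Fin.sum_univ_succ, List.get_eq_getElem, Fin.val_succ,
      Fin.val_zero, List.getElem_cons_zero, List.getElem_cons_succ,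
      lt_self_iff_false, Fin.not_lt_zero, Fin.succ_pos, Fin.succ_lt_succ_iff,
      false_and, true_and, and_false, if_false, Finset.sum_const_zero, add_zero, zero_add]
    simp only [List.get_eq_getElem] at ih
    omega

def Odd3 (x y z : ℕ) : Prop := (x < z ∧ z < y) ∨ (y < x ∧ x < z) ∨ (z < y ∧ y < x)

instance : ∀ x, DecidableRel (Odd3 x) := fun _ _ _ => by unfold Odd3; infer_instance

lemma gep_eq_tcnt (w : List ℕ) : gep w = tcnt Odd3 w := by
  rw [gep, Finset.card_filter, ← sum_trips Odd3 w]
  rfl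



def I21 : List ℕ → ℕ
  | [] => 0
  | y :: w => (if y = 2 then w.count 1 else 0) + I21 w

def I32 : List ℕ → ℕ
  | [] => 0
  | y :: w => (if y = 3 then w.count 2 else 0) + I32 w

def I31 : List ℕ → ℕ
  | [] => 0
  | y :: w => (if y = 3 then w.count 1 else 0) + I31 w

def O13 : List ℕ → ℕ
  | [] => 0
  | y :: w => (if y = 1 then w.count 3 else 0) + O13 w

def Mem123 (w : List ℕ) : Prop := ∀ x ∈ w, x = 1 ∨ x = 2 ∨ x = 3

lemma mem123_tail {y : ℕ} {w : List ℕ} (h : Mem123 (y :: w)) :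
    Mem123 w := fun x hx => h x (List.mem_cons_of_mem y hx)

lemma mem123_head {y : ℕ} {w : List ℕ} (h : Mem123 (y :: w)) :
    y = 1 ∨ y = 2 ∨ y = 3 := h y List.mem_cons_self

lemma countP_closed (p : ℕ → Bool) {w : List ℕ} (h : Mem123 w) :
    w.countP p = (if p 1 then w.count 1 else 0) + (if p 2 then w.count 2 else 0)
      + (if p 3 then w.count 3 else 0) := by
  induction w with
  | nil => simp
  | cons y w ih =>
    rw [List.countP_cons]
    rw [ih (mem123_tail h)]
    rcases mem123_head h with rfl | rfl | rfl <;>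
      simp [List.count_cons] <;> by_cases h1 : p 1 <;> by_cases h2 : p 2 <;>
      by_cases h3 : p 3 <;> simp [h1, h2, h3] <;> omega

lemma pcnt_odd1 {w : List ℕ} (h : Mem123 w) : pcnt (Odd3 1) w = I32 w := by
  induction w with
  | nil => rfl
  | cons y w ih =>
    rw [pcnt, I32, ih (mem123_tail h), countP_closed _ (mem123_tail h)]
    rcases mem123_head h with rfl | rfl | rfl <;> simp [Odd3] <;> omega

lemma pcnt_odd2 {w : List ℕ} (h : Mem123 w) : pcnt (Odd3 2) w = O13 w := by
  induction w with
  | nil => rfl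
  | cons y w ih =>
    rw [pcnt, O13, ih (mem123_tail h), countP_closed _ (mem123_tail h)]
    rcases mem123_head h with rfl | rfl | rfl <;> simp [Odd3] <;> omega

lemma pcnt_odd3 {w : List ℕ} (h : Mem123 w) : pcnt (Odd3 3) w = I21 w := by
  induction w with
  | nil => rfl
  | cons y w ih =>
    rw [pcnt, I21, ih (mem123_tail h), countP_closed _ (mem123_tail h)]
    rcases mem123_head h with rfl | rfl | rfl <;> simp [Odd3] <;> omega

lemma O13_add_I31 (w : List ℕ) : O13 w + I31 w = w.count 1 * w.count 3 := by
  induction w with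
  | nil => rfl
  | cons y w ih =>
    rw [O13, I31, List.count_cons, List.count_cons]
    by_cases h1 : y = 1 <;> by_cases h3 : y = 3 <;> simp [h1, h3] at * <;> nlinarith [ih]

/-- The per-word linear identity. -/
lemma gep_linear {w : List ℕ} (h : Mem123 w) :
    (gep w : ℤ) = (w.count 3 : ℤ) * I21 w + (w.count 1 : ℤ) * I32 w
      - (w.count 2 : ℤ) * I31 w := by
  rw [gep_eq_tcnt]
  induction w with
  | nil => rfl
  | cons y w ih =>
    have ht := mem123_tail h
    have hO : (O13 w : ℤ) = (w.count 1 : ℤ) * w.count 3 - I31 w := by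
      have := O13_add_I31 w; zify at this; linarith
    rw [tcnt]
    rcases mem123_head h with rfl | rfl | rfl <;>
      rw [show ∀ a b : ℕ, ((a + b : ℕ) : ℤ) = (a : ℤ) + b by intros; push_cast; ring] <;>
      [rw [pcnt_odd1 ht]; rw [pcnt_odd2 ht]; rw [pcnt_odd3 ht]] <;>
      rw [ih ht] <;>
      simp [I21, I32, I31, List.count_cons, hO] <;> push_cast <;> ring




lemma count_base (x a b c : ℕ) :
    (List.replicate a 1 ++ List.replicate b 2 ++ List.replicate c 3).count x
      = (if x = 1 then a else 0) + (if x = 2 then b else 0) + (if x = 3 then c else 0) := by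
  by_cases e1 : x = 1 <;> by_cases e2 : x = 2 <;> by_cases e3 : x = 3 <;>
    simp [List.count_append, List.count_replicate, e1, e2, e3] <;> omega

lemma mem_W {w : List ℕ} {a b c : ℕ} :
    w ∈ W a b c ↔ w.count 1 = a ∧ w.count 2 = b ∧ w.count 3 = c ∧ Mem123 w := by
  rw [W, List.mem_toFinset, List.mem_permutations, List.perm_iff_count]
  constructor
  · intro h
    refine ⟨?_, ?_, ?_, ?_⟩
    · rw [h 1, count_base]; simp
    · rw [h 2, count_base]; simp
    · rw [h 3, count_base]; simp
    · intro x hx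
      by_contra hc
      push_neg at hc
      obtain ⟨h1, h2, h3⟩ := hc
      have : w.count x ≠ 0 := by
        simp only [ne_eq, List.count_eq_zero]
        intro hz; exact hz hx
      rw [h x, count_base] at this
      simp [h1, h2, h3] at this
  · rintro ⟨h1, h2, h3, hm⟩ x
    rw [count_base]
    by_cases e1 : x = 1
    · subst e1; simpa using h1
    · by_cases e2 : x = 2
      · subst e2; simpa [e1] using h2
      · by_cases e3 : x = 3
        · subst e3; simpa [e1, e2] using h3
        · simp [e1, e2, e3]
          rw [List.count_eq_zero]
          intro hx
          rcases hm x hx with rfl | rfl | rfl <;> simp at e1 e2 e3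

lemma W_zero : W 0 0 0 = {([] : List ℕ)} := by
  ext w
  rw [mem_W]
  constructor
  · rintro ⟨h1, h2, h3, hm⟩
    simp only [Finset.mem_singleton]
    rcases w with _ | ⟨y, t⟩
    · rfl
    · exfalso
      rcases mem123_head hm with rfl | rfl | rfl <;>
        simp [List.count_cons] at h1 h2 h3
  · rintro h
    simp only [Finset.mem_singleton] at h
    subst h
    exact ⟨rfl, rfl, rfl, by intro x hx; simp at hx⟩

lemma mem123_cons {y : ℕ} {t : List ℕ} :
    Mem123 (y :: t) ↔ (y = 1 ∨ y = 2 ∨ y = 3) ∧ Mem123 t := by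
  simp [Mem123, List.forall_mem_cons]

lemma mem_W_cons1 {t : List ℕ} {a b c : ℕ} (ha : a ≠ 0) :
    (1 :: t) ∈ W a b c ↔ t ∈ W (a - 1) b c := by
  simp only [mem_W, mem123_cons, List.count_cons]
  norm_num
  intros
  omega

lemma mem_W_cons2 {t : List ℕ} {a b c : ℕ} (hb : b ≠ 0) :
    (2 :: t) ∈ W a b c ↔ t ∈ W a (b - 1) c := by
  simp only [mem_W, mem123_cons, List.count_cons]
  norm_num
  intros
  omega

lemma mem_W_cons3 {t : List ℕ} {a b c : ℕ} (hc : c ≠ 0) :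
    (3 :: t) ∈ W a b c ↔ t ∈ W a b (c - 1) := by
  simp only [mem_W, mem123_cons, List.count_cons]
  norm_num
  intros
  omega

lemma disj_cons_image {x y : ℕ} (hxy : x ≠ y) (s s' : Finset (List ℕ)) :
    Disjoint (s.image (fun t => x :: t)) (s'.image (fun t => y :: t)) := by
  rw [Finset.disjoint_left]
  rintro w hw hw'
  simp only [Finset.mem_image] at hw hw'
  obtain ⟨t, _, rfl⟩ := hw
  obtain ⟨t', _, ht'⟩ := hw'
  exact hxy (by injection ht'.symm)

lemma sum_W_decomp (F : List ℕ → ℚ) (a b c : ℕ) (h : a + b + c ≠ 0) :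
    ∑ w ∈ W a b c, F w =
      (if a = 0 then 0 else ∑ w ∈ W (a - 1) b c, F (1 :: w))
      + (if b = 0 then 0 else ∑ w ∈ W a (b - 1) c, F (2 :: w))
      + (if c = 0 then 0 else ∑ w ∈ W a b (c - 1), F (3 :: w)) := by
  classical
  set D1 : Finset (List ℕ) := if a = 0 then ∅ else (W (a - 1) b c).image (fun t => 1 :: t) with hD1
  set D2 : Finset (List ℕ) := if b = 0 then ∅ else (W a (b - 1) c).image (fun t => 2 :: t) with hD2
  set D3 : Finset (List ℕ) := if c = 0 then ∅ else (W a b (c - 1)).image (fun t => 3 :: t) with hD3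
  have hinj : ∀ x : ℕ, Function.Injective (fun t : List ℕ => x :: t) := by
    intro x t t' ht; injection ht
  have key : W a b c = (D1 ∪ D2) ∪ D3 := by
    ext w
    simp only [Finset.mem_union]
    constructor
    · intro hw
      have hw' := hw
      rw [mem_W] at hw'
      obtain ⟨h1, h2, h3, hm⟩ := hw'
      rcases w with _ | ⟨y, t⟩
      · exfalso; simp at h1 h2 h3; omega
      · rcases mem123_head hm with rfl | rfl | rfl
        · have ha : a ≠ 0 := by
            simp [List.count_cons] at h1; omega
          left; left
          rw [hD1, if_neg ha, Finset.mem_image]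
          exact ⟨t, (mem_W_cons1 ha).mp hw, rfl⟩
        · have hb : b ≠ 0 := by
            simp [List.count_cons] at h2; omega
          left; right
          rw [hD2, if_neg hb, Finset.mem_image]
          exact ⟨t, (mem_W_cons2 hb).mp hw, rfl⟩
        · have hc : c ≠ 0 := by
            simp [List.count_cons] at h3; omega
          right
          rw [hD3, if_neg hc, Finset.mem_image]
          exact ⟨t, (mem_W_cons3 hc).mp hw, rfl⟩
    · rintro ((hw | hw) | hw)
      · rw [hD1] at hw
        by_cases ha : a = 0
        · rw [if_pos ha] at hw; simp at hw
        · rw [if_neg ha, Finset.mem_image] at hw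
          obtain ⟨t, ht, rfl⟩ := hw
          exact (mem_W_cons1 ha).mpr ht
      · rw [hD2] at hw
        by_cases hb : b = 0
        · rw [if_pos hb] at hw; simp at hw
        · rw [if_neg hb, Finset.mem_image] at hw
          obtain ⟨t, ht, rfl⟩ := hw
          exact (mem_W_cons2 hb).mpr ht
      · rw [hD3] at hw
        by_cases hc : c = 0
        · rw [if_pos hc] at hw; simp at hw
        · rw [if_neg hc, Finset.mem_image] at hw
          obtain ⟨t, ht, rfl⟩ := hw
          exact (mem_W_cons3 hc).mpr ht
  have d12 : Disjoint D1 D2 := by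
    rw [hD1, hD2]
    by_cases ha : a = 0 <;> by_cases hb : b = 0 <;>
      simp [ha, hb, disj_cons_image (by norm_num : (1:ℕ) ≠ 2)]
  have d13 : Disjoint D1 D3 := by
    rw [hD1, hD3]
    by_cases ha : a = 0 <;> by_cases hc : c = 0 <;>
      simp [ha, hc, disj_cons_image (by norm_num : (1:ℕ) ≠ 3)]
  have d23 : Disjoint D2 D3 := by
    rw [hD2, hD3]
    by_cases hb : b = 0 <;> by_cases hc : c = 0 <;>
      simp [hb, hc, disj_cons_image (by norm_num : (2:ℕ) ≠ 3)]
  have d123 : Disjoint (D1 ∪ D2) D3 := Finset.disjoint_union_left.mpr ⟨d13, d23⟩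
  rw [key, Finset.sum_union d123, Finset.sum_union d12]
  congr 1
  · congr 1
    · rw [hD1]
      by_cases ha : a = 0
      · simp [ha]
      · rw [if_neg ha, if_neg ha, Finset.sum_image (fun t _ t' _ ht => hinj 1 ht)]
    · rw [hD2]
      by_cases hb : b = 0
      · simp [hb]
      · rw [if_neg hb, if_neg hb, Finset.sum_image (fun t _ t' _ ht => hinj 2 ht)]
  · rw [hD3]
    by_cases hc : c = 0
    · simp [hc]
    · rw [if_neg hc, if_neg hc, Finset.sum_image (fun t _ t' _ ht => hinj 3 ht)]



noncomputable def Y (w : List ℕ) : ℚ := (I21 w : ℚ) + (I32 w : ℚ) - (I31 w : ℚ)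

lemma Y_cons1 (w : List ℕ) : Y (1 :: w) = Y w := by
  simp [Y, I21, I32, I31]

lemma Y_cons2 (w : List ℕ) : Y (2 :: w) = Y w + (w.count 1 : ℚ) := by
  simp [Y, I21, I32, I31]
  push_cast
  ring

lemma Y_cons3 (w : List ℕ) : Y (3 :: w) = Y w + (w.count 2 : ℚ) - (w.count 1 : ℚ) := by
  simp [Y, I21, I32, I31]
  push_cast
  ring

noncomputable def Nn (a b c : ℕ) : ℚ :=
  ((a + b + c).factorial : ℚ) / ((a.factorial : ℚ) * (b.factorial : ℚ) * (c.factorial : ℚ))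

lemma Nn_pos (a b c : ℕ) : 0 < Nn a b c := by
  apply div_pos
  · exact_mod_cast Nat.factorial_pos _
  · have h1 : (0:ℚ) < a.factorial := by exact_mod_cast Nat.factorial_pos _
    have h2 : (0:ℚ) < b.factorial := by exact_mod_cast Nat.factorial_pos _
    have h3 : (0:ℚ) < c.factorial := by exact_mod_cast Nat.factorial_pos _
    positivity

lemma Nn_ne_zero (a b c : ℕ) : Nn a b c ≠ 0 := ne_of_gt (Nn_pos a b c)

lemma fact_ne (n : ℕ) : ((n.factorial : ℚ)) ≠ 0 := by
  exact_mod_cast (Nat.factorial_pos n).ne'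

lemma Nn_ratio1 {a : ℕ} (b c : ℕ) (ha : a ≠ 0) :
    Nn (a - 1) b c = (a : ℚ) * Nn a b c / ((a : ℚ) + b + c) := by
  obtain ⟨a', rfl⟩ := Nat.exists_eq_succ_of_ne_zero ha
  simp only [Nn, Nat.succ_sub_one]
  have h1 : a' + 1 + b + c = (a' + b + c) + 1 := by omega
  rw [h1, Nat.factorial_succ, Nat.factorial_succ]
  have hs : ((a' : ℚ) + 1 + b + c) ≠ 0 := by positivity
  field_simp
  push_cast
  ring

lemma Nn_ratio2 (a : ℕ) {b : ℕ} (c : ℕ) (hb : b ≠ 0) :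
    Nn a (b - 1) c = (b : ℚ) * Nn a b c / ((a : ℚ) + b + c) := by
  obtain ⟨b', rfl⟩ := Nat.exists_eq_succ_of_ne_zero hb
  simp only [Nn, Nat.succ_sub_one]
  have h1 : a + (b' + 1) + c = (a + b' + c) + 1 := by omega
  rw [h1, Nat.factorial_succ, Nat.factorial_succ]
  have hs : ((a : ℚ) + (b' + 1) + c) ≠ 0 := by positivity
  field_simp
  push_cast
  ring

lemma Nn_ratio3 (a b : ℕ) {c : ℕ} (hc : c ≠ 0) :
    Nn a b (c - 1) = (c : ℚ) * Nn a b c / ((a : ℚ) + b + c) := by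
  obtain ⟨c', rfl⟩ := Nat.exists_eq_succ_of_ne_zero hc
  simp only [Nn, Nat.succ_sub_one]
  have h1 : a + b + (c' + 1) = (a + b + c') + 1 := by omega
  rw [h1, Nat.factorial_succ, Nat.factorial_succ]
  have hs : ((a : ℚ) + b + (c' + 1)) ≠ 0 := by positivity
  field_simp
  push_cast
  ring

lemma sum_poly4 (s : Finset (List ℕ)) (g : List ℕ → ℚ) (c0 c1 c2 c3 c4 : ℚ) :
    (∑ w ∈ s, (c4 * g w ^ 4 + c3 * g w ^ 3 + c2 * g w ^ 2 + c1 * g w + c0))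
      = c4 * (∑ w ∈ s, g w ^ 4) + c3 * (∑ w ∈ s, g w ^ 3) + c2 * (∑ w ∈ s, g w ^ 2)
        + c1 * (∑ w ∈ s, g w) + c0 * (s.card : ℚ) := by
  simp only [Finset.sum_add_distrib, ← Finset.mul_sum, Finset.sum_const, nsmul_eq_mul]
  ring



noncomputable def P1 (a b c : ℚ) : ℚ := (1/2)*b*c + (-1/2)*a*c + (1/2)*a*b

noncomputable def P2 (a b c : ℚ) : ℚ := (1/12)*b*c + (1/12)*b*c^2 + (1/12)*b^2*c + (1/4)*b^2*c^2 + (1/12)*a*c + (1/12)*a*c^2 + (1/12)*a*b + (-1/2)*a*b*c + (-1/2)*a*b*c^2 + (1/12)*a*b^2 + (1/2)*a*b^2*c + (1/12)*a^2*c + (1/4)*a^2*c^2 + (1/12)*a^2*b + (-1/2)*a^2*b*c + (1/4)*a^2*b^2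

noncomputable def P3 (a b c : ℚ) : ℚ := (1/8)*b^2*c^2 + (1/8)*b^2*c^3 + (1/8)*b^3*c^2 + (1/8)*b^3*c^3 + (1/4)*a*b^2*c + (-3/4)*a*b^2*c^2 + (-3/8)*a*b^2*c^3 + (1/4)*a*b^3*c + (3/8)*a*b^3*c^2 + (-1/8)*a^2*c^2 + (-1/8)*a^2*c^3 + 1*a^2*b*c^2 + (3/8)*a^2*b*c^3 + (1/8)*a^2*b^2 + (-3/4)*a^2*b^2*c + (-3/4)*a^2*b^2*c^2 + (1/8)*a^2*b^3 + (3/8)*a^2*b^3*c + (-1/8)*a^3*c^2 + (-1/8)*a^3*c^3 + (3/8)*a^3*b*c^2 + (1/8)*a^3*b^2 + (-3/8)*a^3*b^2*c + (1/8)*a^3*b^3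

noncomputable def P4 (a b c : ℚ) : ℚ := (-1/120)*b*c^2 + (-1/60)*b*c^3 + (-1/120)*b*c^4 + (-1/120)*b^2*c + (-1/240)*b^2*c^2 + (1/40)*b^2*c^3 + (1/48)*b^2*c^4 + (-1/60)*b^3*c + (1/40)*b^3*c^2 + (1/6)*b^3*c^3 + (1/8)*b^3*c^4 + (-1/120)*b^4*c + (1/48)*b^4*c^2 + (1/8)*b^4*c^3 + (1/16)*b^4*c^4 + (-1/120)*a*c^2 + (-1/60)*a*c^3 + (-1/120)*a*c^4 + (-3/20)*a*b*c + (1/8)*a*b*c^2 + (19/60)*a*b*c^3 + (1/24)*a*b*c^4 + (-1/120)*a*b^2 + (1/8)*a*b^2*c + (-7/20)*a*b^2*c^2 + (-1/3)*a*b^2*c^3 + (-1/8)*a*b^2*c^4 + (-1/60)*a*b^3 + (19/60)*a*b^3*c + (1/6)*a*b^3*c^2 + (-3/4)*a*b^3*c^3 + (-1/4)*a*b^3*c^4 + (-1/120)*a*b^4 + (1/24)*a*b^4*c + (3/8)*a*b^4*c^2 + (1/4)*a*b^4*c^3 + (-1/120)*a^2*c + (-1/240)*a^2*c^2 + (1/40)*a^2*c^3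 + (1/48)*a^2*c^4 + (-1/120)*a^2*b + (1/8)*a^2*b*c + (-7/20)*a^2*b*c^2 + (-1/3)*a^2*b*c^3 + (-1/8)*a^2*b*c^4 + (-1/240)*a^2*b^2 + (-7/20)*a^2*b^2*c + (5/8)*a^2*b^2*c^2 + (7/4)*a^2*b^2*c^3 + (3/8)*a^2*b^2*c^4 + (1/40)*a^2*b^3 + (1/6)*a^2*b^3*c + (-7/4)*a^2*b^3*c^2 + (-3/4)*a^2*b^3*c^3 + (1/48)*a^2*b^4 + (3/8)*a^2*b^4*c + (3/8)*a^2*b^4*c^2 + (-1/60)*a^3*c + (1/40)*a^3*c^2 + (1/6)*a^3*c^3 + (1/8)*a^3*c^4 + (-1/60)*a^3*b + (19/60)*a^3*b*c + (-1/3)*a^3*b*c^2 + (-5/4)*a^3*b*c^3 + (-1/4)*a^3*b*c^4 + (1/40)*a^3*b^2 + (-1/3)*a^3*b^2*c + (7/4)*a^3*b^2*c^2 + (3/4)*a^3*b^2*c^3 + (1/6)*a^3*b^3 + (-3/4)*a^3*b^3*c + (-3/4)*a^3*b^3*c^2 + (1/8)*a^3*b^4 + (1/4)*a^3*b^4*c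 + (-1/120)*a^4*c + (1/48)*a^4*c^2 + (1/8)*a^4*c^3 + (1/16)*a^4*c^4 + (-1/120)*a^4*b + (1/24)*a^4*b*c + (-1/8)*a^4*b*c^2 + (-1/4)*a^4*b*c^3 + (1/48)*a^4*b^2 + (-1/8)*a^4*b^2*c + (3/8)*a^4*b^2*c^2 + (1/8)*a^4*b^3 + (-1/4)*a^4*b^3*c + (1/16)*a^4*b^4

lemma star0 (a b c : ℚ) :
    (a + b + c) * (1) =
      a * (1)
      + b * ((1))
      + c * ((1)) := by ring

lemma star1 (a b c : ℚ) :
    (a + b + c) * (P1 a b c) =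
      a * (P1 (a-1) b c)
      + b * (1 * a^1 * (1) + (P1 a (b-1) c))
      + c * (1 * (b-a)^1 * (1) + (P1 a b (c-1))) := by simp only [P1, P2, P3, P4]; ring

lemma star2 (a b c : ℚ) :
    (a + b + c) * (P2 a b c) =
      a * (P2 (a-1) b c)
      + b * (1 * a^2 * (1) + 2 * a^1 * (P1 a (b-1) c) + (P2 a (b-1) c))
      + c * (1 * (b-a)^2 * (1) + 2 * (b-a)^1 * (P1 a b (c-1)) + (P2 a b (c-1))) := by simp only [P1, P2, P3, P4]; ring

lemma star3 (a b c : ℚ) :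
    (a + b + c) * (P3 a b c) =
      a * (P3 (a-1) b c)
      + b * (1 * a^3 * (1) + 3 * a^2 * (P1 a (b-1) c) + 3 * a^1 * (P2 a (b-1) c) + (P3 a (b-1) c))
      + c * (1 * (b-a)^3 * (1) + 3 * (b-a)^2 * (P1 a b (c-1)) + 3 * (b-a)^1 * (P2 a b (c-1)) + (P3 a b (c-1))) := by simp only [P1, P2, P3, P4]; ring

lemma star4 (a b c : ℚ) :
    (a + b + c) * (P4 a b c) =
      a * (P4 (a-1) b c)
      + b * (1 * a^4 * (1) + 4 * a^3 * (P1 a (b-1) c) + 6 * a^2 * (P2 a (b-1) c) + 4 * a^1 * (P3 a (b-1) c) + (P4 a (b-1) c))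
      + c * (1 * (b-a)^4 * (1) + 4 * (b-a)^3 * (P1 a b (c-1)) + 6 * (b-a)^2 * (P2 a b (c-1)) + 4 * (b-a)^1 * (P3 a b (c-1)) + (P4 a b (c-1))) := by simp only [P1, P2, P3, P4]; ring


set_option maxHeartbeats 4000000 in
lemma master : ∀ m : ℕ, ∀ a b c : ℕ, a + b + c = m →
    (((W a b c).card : ℚ) = Nn a b c)
    ∧ ((∑ w ∈ W a b c, Y w) = Nn a b c * P1 (a:ℚ) (b:ℚ) (c:ℚ))
    ∧ ((∑ w ∈ W a b c, Y w ^ 2) = Nn a b c * P2 (a:ℚ) (b:ℚ) (c:ℚ))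
    ∧ ((∑ w ∈ W a b c, Y w ^ 3) = Nn a b c * P3 (a:ℚ) (b:ℚ) (c:ℚ))
    ∧ ((∑ w ∈ W a b c, Y w ^ 4) = Nn a b c * P4 (a:ℚ) (b:ℚ) (c:ℚ)) := by
  intro m
  induction m using Nat.strong_induction_on with
  | _ m IH =>
  intro a b c habc
  rcases Nat.eq_zero_or_pos m with hm | hm
  · have ha : a = 0 := by omega
    have hb : b = 0 := by omega
    have hc : c = 0 := by omega
    subst ha; subst hb; subst hc
    refine ⟨?_, ?_, ?_, ?_, ?_⟩ <;> rw [W_zero] <;>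
      simp [Y, I21, I32, I31, Nn, P1, P2, P3, P4, Nat.factorial] <;> norm_num
  · have hs : ((a:ℚ) + (b:ℚ) + (c:ℚ)) ≠ 0 := by
      have h0 : 0 < a + b + c := by omega
      have h0' : (0:ℚ) < ((a + b + c : ℕ) : ℚ) := by exact_mod_cast h0
      push_cast at h0'
      linarith
    refine ⟨?_, ?_, ?_, ?_, ?_⟩
    · -- moment r = 0
      have hcs : ((W a b c).card : ℚ) = ∑ _w ∈ W a b c, (1:ℚ) := by simp
      rw [hcs, sum_W_decomp (fun _ => (1:ℚ)) a b c (by omega)]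
      have hA : (if a = 0 then 0 else ∑ w ∈ W (a-1) b c, (1:ℚ)) = (a:ℚ) * Nn a b c * (1) / ((a:ℚ) + (b:ℚ) + (c:ℚ)) := by
        by_cases ha : a = 0
        · simp [ha]
        · rw [if_neg ha]
          have hcs2 : (∑ _w ∈ W (a-1) b c, (1:ℚ)) = ((W (a-1) b c).card : ℚ) := by simp
          rw [hcs2, (IH (m-1) (by omega) (a-1) b c (by omega)).1]
          rw [Nn_ratio1 b c ha]
          ring
      have hB : (if b = 0 then 0 else ∑ w ∈ W a (b-1) c, (1:ℚ)) = (b:ℚ) * Nn a b c * ((1)) / ((a:ℚ) + (b:ℚ) + (c:ℚ)) := by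
        by_cases hb : b = 0
        · simp [hb]
        · rw [if_neg hb]
          have hcs2 : (∑ _w ∈ W a (b-1) c, (1:ℚ)) = ((W a (b-1) c).card : ℚ) := by simp
          rw [hcs2, (IH (m-1) (by omega) a (b-1) c (by omega)).1]
          rw [Nn_ratio2 a c hb]
          ring
      have hC : (if c = 0 then 0 else ∑ w ∈ W a b (c-1), (1:ℚ)) = (c:ℚ) * Nn a b c * ((1)) / ((a:ℚ) + (b:ℚ) + (c:ℚ)) := by
        by_cases hc : c = 0
        · simp [hc]
        · rw [if_neg hc]
          have hcs2 : (∑ _w ∈ W a b (c-1), (1:ℚ)) = ((W a b (c-1)).card : ℚ) := by simp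
          rw [hcs2, (IH (m-1) (by omega) a b (c-1) (by omega)).1]
          rw [Nn_ratio3 a b hc]
          ring
      rw [hA, hB, hC, ← add_div, ← add_div, div_eq_iff hs]
      linear_combination (-(Nn a b c)) * star0 (a:ℚ) (b:ℚ) (c:ℚ)
    · -- moment r = 1
      rw [sum_W_decomp (fun w => Y w) a b c (by omega)]
      have hA : (if a = 0 then 0 else ∑ w ∈ W (a-1) b c, Y (1 :: w)) = (a:ℚ) * Nn a b c * (P1 ((a:ℚ)-1) (b:ℚ) (c:ℚ)) / ((a:ℚ) + (b:ℚ) + (c:ℚ)) := by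
        by_cases ha : a = 0
        · simp [ha]
        · rw [if_neg ha]
          have e : ∀ w ∈ W (a-1) b c, Y (1 :: w) = Y w := by
            intro w _; rw [Y_cons1]
          rw [Finset.sum_congr rfl e, (IH (m-1) (by omega) (a-1) b c (by omega)).2.1]
          rw [Nn_ratio1 b c ha, Nat.cast_sub (by omega : 1 ≤ a), Nat.cast_one]
          ring
      have hB : (if b = 0 then 0 else ∑ w ∈ W a (b-1) c, Y (2 :: w)) = (b:ℚ) * Nn a b c * ((P1 (a:ℚ) ((b:ℚ)-1) (c:ℚ)) + ((a:ℚ)) * (1)) / ((a:ℚ) + (b:ℚ) + (c:ℚ)) := by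
        by_cases hb : b = 0
        · simp [hb]
        · rw [if_neg hb]
          have e : ∀ w ∈ W a (b-1) c, Y (2 :: w) = 0 * Y w ^ 4 + 0 * Y w ^ 3 + 0 * Y w ^ 2 + 1 * Y w + ((a:ℚ)) := by
            intro w hw
            obtain ⟨h1, _h2, _h3, _hm⟩ := mem_W.mp hw
            rw [Y_cons2, h1]; ring
          have IHb := IH (m-1) (by omega) a (b-1) c (by omega)
          rw [Finset.sum_congr rfl e, sum_poly4, IHb.1, IHb.2.1, IHb.2.2.1, IHb.2.2.2.1, IHb.2.2.2.2]
          rw [Nn_ratio2 a c hb, Nat.cast_sub (by omega : 1 ≤ b), Nat.cast_one]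
          ring
      have hC : (if c = 0 then 0 else ∑ w ∈ W a b (c-1), Y (3 :: w)) = (c:ℚ) * Nn a b c * ((P1 (a:ℚ) (b:ℚ) ((c:ℚ)-1)) + ((b:ℚ) - (a:ℚ)) * (1)) / ((a:ℚ) + (b:ℚ) + (c:ℚ)) := by
        by_cases hc : c = 0
        · simp [hc]
        · rw [if_neg hc]
          have e : ∀ w ∈ W a b (c-1), Y (3 :: w) = 0 * Y w ^ 4 + 0 * Y w ^ 3 + 0 * Y w ^ 2 + 1 * Y w + ((b:ℚ) - (a:ℚ)) := by
            intro w hw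
            obtain ⟨h1, h2, _h3, _hm⟩ := mem_W.mp hw
            rw [Y_cons3, h1, h2]; ring
          have IHc := IH (m-1) (by omega) a b (c-1) (by omega)
          rw [Finset.sum_congr rfl e, sum_poly4, IHc.1, IHc.2.1, IHc.2.2.1, IHc.2.2.2.1, IHc.2.2.2.2]
          rw [Nn_ratio3 a b hc, Nat.cast_sub (by omega : 1 ≤ c), Nat.cast_one]
          ring
      rw [hA, hB, hC, ← add_div, ← add_div, div_eq_iff hs]
      linear_combination (-(Nn a b c)) * star1 (a:ℚ) (b:ℚ) (c:ℚ)
    · -- moment r = 2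
      rw [sum_W_decomp (fun w => Y w ^ 2) a b c (by omega)]
      have hA : (if a = 0 then 0 else ∑ w ∈ W (a-1) b c, Y (1 :: w) ^ 2) = (a:ℚ) * Nn a b c * (P2 ((a:ℚ)-1) (b:ℚ) (c:ℚ)) / ((a:ℚ) + (b:ℚ) + (c:ℚ)) := by
        by_cases ha : a = 0
        · simp [ha]
        · rw [if_neg ha]
          have e : ∀ w ∈ W (a-1) b c, Y (1 :: w) ^ 2 = Y w ^ 2 := by
            intro w _; rw [Y_cons1]
          rw [Finset.sum_congr rfl e, (IH (m-1) (by omega) (a-1) b c (by omega)).2.2.1]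
          rw [Nn_ratio1 b c ha, Nat.cast_sub (by omega : 1 ≤ a), Nat.cast_one]
          ring
      have hB : (if b = 0 then 0 else ∑ w ∈ W a (b-1) c, Y (2 :: w) ^ 2) = (b:ℚ) * Nn a b c * ((P2 (a:ℚ) ((b:ℚ)-1) (c:ℚ)) + 2 * ((a:ℚ)) * (P1 (a:ℚ) ((b:ℚ)-1) (c:ℚ)) + ((a:ℚ))^2 * (1)) / ((a:ℚ) + (b:ℚ) + (c:ℚ)) := by
        by_cases hb : b = 0
        · simp [hb]
        · rw [if_neg hb]
          have e : ∀ w ∈ W a (b-1) c, Y (2 :: w) ^ 2 = 0 * Y w ^ 4 + 0 * Y w ^ 3 + 1 * Y w ^ 2 + 2 * ((a:ℚ)) * Y w + ((a:ℚ))^2 := by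
            intro w hw
            obtain ⟨h1, _h2, _h3, _hm⟩ := mem_W.mp hw
            rw [Y_cons2, h1]; ring
          have IHb := IH (m-1) (by omega) a (b-1) c (by omega)
          rw [Finset.sum_congr rfl e, sum_poly4, IHb.1, IHb.2.1, IHb.2.2.1, IHb.2.2.2.1, IHb.2.2.2.2]
          rw [Nn_ratio2 a c hb, Nat.cast_sub (by omega : 1 ≤ b), Nat.cast_one]
          ring
      have hC : (if c = 0 then 0 else ∑ w ∈ W a b (c-1), Y (3 :: w) ^ 2) = (c:ℚ) * Nn a b c * ((P2 (a:ℚ) (b:ℚ) ((c:ℚ)-1)) + 2 * ((b:ℚ) - (a:ℚ)) * (P1 (a:ℚ) (b:ℚ) ((c:ℚ)-1)) + ((b:ℚ) - (a:ℚ))^2 * (1)) / ((a:ℚ) + (b:ℚ) + (c:ℚ)) := by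
        by_cases hc : c = 0
        · simp [hc]
        · rw [if_neg hc]
          have e : ∀ w ∈ W a b (c-1), Y (3 :: w) ^ 2 = 0 * Y w ^ 4 + 0 * Y w ^ 3 + 1 * Y w ^ 2 + 2 * ((b:ℚ) - (a:ℚ)) * Y w + ((b:ℚ) - (a:ℚ))^2 := by
            intro w hw
            obtain ⟨h1, h2, _h3, _hm⟩ := mem_W.mp hw
            rw [Y_cons3, h1, h2]; ring
          have IHc := IH (m-1) (by omega) a b (c-1) (by omega)
          rw [Finset.sum_congr rfl e, sum_poly4, IHc.1, IHc.2.1, IHc.2.2.1, IHc.2.2.2.1, IHc.2.2.2.2]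
          rw [Nn_ratio3 a b hc, Nat.cast_sub (by omega : 1 ≤ c), Nat.cast_one]
          ring
      rw [hA, hB, hC, ← add_div, ← add_div, div_eq_iff hs]
      linear_combination (-(Nn a b c)) * star2 (a:ℚ) (b:ℚ) (c:ℚ)
    · -- moment r = 3
      rw [sum_W_decomp (fun w => Y w ^ 3) a b c (by omega)]
      have hA : (if a = 0 then 0 else ∑ w ∈ W (a-1) b c, Y (1 :: w) ^ 3) = (a:ℚ) * Nn a b c * (P3 ((a:ℚ)-1) (b:ℚ) (c:ℚ)) / ((a:ℚ) + (b:ℚ) + (c:ℚ)) := by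
        by_cases ha : a = 0
        · simp [ha]
        · rw [if_neg ha]
          have e : ∀ w ∈ W (a-1) b c, Y (1 :: w) ^ 3 = Y w ^ 3 := by
            intro w _; rw [Y_cons1]
          rw [Finset.sum_congr rfl e, (IH (m-1) (by omega) (a-1) b c (by omega)).2.2.2.1]
          rw [Nn_ratio1 b c ha, Nat.cast_sub (by omega : 1 ≤ a), Nat.cast_one]
          ring
      have hB : (if b = 0 then 0 else ∑ w ∈ W a (b-1) c, Y (2 :: w) ^ 3) = (b:ℚ) * Nn a b c * ((P3 (a:ℚ) ((b:ℚ)-1) (c:ℚ)) + 3 * ((a:ℚ)) * (P2 (a:ℚ) ((b:ℚ)-1) (c:ℚ)) + 3 * ((a:ℚ))^2 * (P1 (a:ℚ) ((b:ℚ)-1) (c:ℚ)) + ((a:ℚ))^3 * (1)) / ((a:ℚ) + (b:ℚ) + (c:ℚ)) := by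
        by_cases hb : b = 0
        · simp [hb]
        · rw [if_neg hb]
          have e : ∀ w ∈ W a (b-1) c, Y (2 :: w) ^ 3 = 0 * Y w ^ 4 + 1 * Y w ^ 3 + 3 * ((a:ℚ)) * Y w ^ 2 + 3 * ((a:ℚ))^2 * Y w + ((a:ℚ))^3 := by
            intro w hw
            obtain ⟨h1, _h2, _h3, _hm⟩ := mem_W.mp hw
            rw [Y_cons2, h1]; ring
          have IHb := IH (m-1) (by omega) a (b-1) c (by omega)
          rw [Finset.sum_congr rfl e, sum_poly4, IHb.1, IHb.2.1, IHb.2.2.1, IHb.2.2.2.1, IHb.2.2.2.2]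
          rw [Nn_ratio2 a c hb, Nat.cast_sub (by omega : 1 ≤ b), Nat.cast_one]
          ring
      have hC : (if c = 0 then 0 else ∑ w ∈ W a b (c-1), Y (3 :: w) ^ 3) = (c:ℚ) * Nn a b c * ((P3 (a:ℚ) (b:ℚ) ((c:ℚ)-1)) + 3 * ((b:ℚ) - (a:ℚ)) * (P2 (a:ℚ) (b:ℚ) ((c:ℚ)-1)) + 3 * ((b:ℚ) - (a:ℚ))^2 * (P1 (a:ℚ) (b:ℚ) ((c:ℚ)-1)) + ((b:ℚ) - (a:ℚ))^3 * (1)) / ((a:ℚ) + (b:ℚ) + (c:ℚ)) := by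
        by_cases hc : c = 0
        · simp [hc]
        · rw [if_neg hc]
          have e : ∀ w ∈ W a b (c-1), Y (3 :: w) ^ 3 = 0 * Y w ^ 4 + 1 * Y w ^ 3 + 3 * ((b:ℚ) - (a:ℚ)) * Y w ^ 2 + 3 * ((b:ℚ) - (a:ℚ))^2 * Y w + ((b:ℚ) - (a:ℚ))^3 := by
            intro w hw
            obtain ⟨h1, h2, _h3, _hm⟩ := mem_W.mp hw
            rw [Y_cons3, h1, h2]; ring
          have IHc := IH (m-1) (by omega) a b (c-1) (by omega)
          rw [Finset.sum_congr rfl e, sum_poly4, IHc.1, IHc.2.1, IHc.2.2.1, IHc.2.2.2.1, IHc.2.2.2.2]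
          rw [Nn_ratio3 a b hc, Nat.cast_sub (by omega : 1 ≤ c), Nat.cast_one]
          ring
      rw [hA, hB, hC, ← add_div, ← add_div, div_eq_iff hs]
      linear_combination (-(Nn a b c)) * star3 (a:ℚ) (b:ℚ) (c:ℚ)
    · -- moment r = 4
      rw [sum_W_decomp (fun w => Y w ^ 4) a b c (by omega)]
      have hA : (if a = 0 then 0 else ∑ w ∈ W (a-1) b c, Y (1 :: w) ^ 4) = (a:ℚ) * Nn a b c * (P4 ((a:ℚ)-1) (b:ℚ) (c:ℚ)) / ((a:ℚ) + (b:ℚ) + (c:ℚ)) := by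
        by_cases ha : a = 0
        · simp [ha]
        · rw [if_neg ha]
          have e : ∀ w ∈ W (a-1) b c, Y (1 :: w) ^ 4 = Y w ^ 4 := by
            intro w _; rw [Y_cons1]
          rw [Finset.sum_congr rfl e, (IH (m-1) (by omega) (a-1) b c (by omega)).2.2.2.2]
          rw [Nn_ratio1 b c ha, Nat.cast_sub (by omega : 1 ≤ a), Nat.cast_one]
          ring
      have hB : (if b = 0 then 0 else ∑ w ∈ W a (b-1) c, Y (2 :: w) ^ 4) = (b:ℚ) * Nn a b c * ((P4 (a:ℚ) ((b:ℚ)-1) (c:ℚ)) + 4 * ((a:ℚ)) * (P3 (a:ℚ) ((b:ℚ)-1) (c:ℚ)) + 6 * ((a:ℚ))^2 * (P2 (a:ℚ) ((b:ℚ)-1) (c:ℚ)) + 4 * ((a:ℚ))^3 * (P1 (a:ℚ) ((b:ℚ)-1) (c:ℚ)) + ((a:ℚ))^4 * (1)) / ((a:ℚ) + (b:ℚ) + (c:ℚ)) := by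
        by_cases hb : b = 0
        · simp [hb]
        · rw [if_neg hb]
          have e : ∀ w ∈ W a (b-1) c, Y (2 :: w) ^ 4 = 1 * Y w ^ 4 + 4 * ((a:ℚ)) * Y w ^ 3 + 6 * ((a:ℚ))^2 * Y w ^ 2 + 4 * ((a:ℚ))^3 * Y w + ((a:ℚ))^4 := by
            intro w hw
            obtain ⟨h1, _h2, _h3, _hm⟩ := mem_W.mp hw
            rw [Y_cons2, h1]; ring
          have IHb := IH (m-1) (by omega) a (b-1) c (by omega)
          rw [Finset.sum_congr rfl e, sum_poly4, IHb.1, IHb.2.1, IHb.2.2.1, IHb.2.2.2.1, IHb.2.2.2.2]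
          rw [Nn_ratio2 a c hb, Nat.cast_sub (by omega : 1 ≤ b), Nat.cast_one]
          ring
      have hC : (if c = 0 then 0 else ∑ w ∈ W a b (c-1), Y (3 :: w) ^ 4) = (c:ℚ) * Nn a b c * ((P4 (a:ℚ) (b:ℚ) ((c:ℚ)-1)) + 4 * ((b:ℚ) - (a:ℚ)) * (P3 (a:ℚ) (b:ℚ) ((c:ℚ)-1)) + 6 * ((b:ℚ) - (a:ℚ))^2 * (P2 (a:ℚ) (b:ℚ) ((c:ℚ)-1)) + 4 * ((b:ℚ) - (a:ℚ))^3 * (P1 (a:ℚ) (b:ℚ) ((c:ℚ)-1)) + ((b:ℚ) - (a:ℚ))^4 * (1)) / ((a:ℚ) + (b:ℚ) + (c:ℚ)) := by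
        by_cases hc : c = 0
        · simp [hc]
        · rw [if_neg hc]
          have e : ∀ w ∈ W a b (c-1), Y (3 :: w) ^ 4 = 1 * Y w ^ 4 + 4 * ((b:ℚ) - (a:ℚ)) * Y w ^ 3 + 6 * ((b:ℚ) - (a:ℚ))^2 * Y w ^ 2 + 4 * ((b:ℚ) - (a:ℚ))^3 * Y w + ((b:ℚ) - (a:ℚ))^4 := by
            intro w hw
            obtain ⟨h1, h2, _h3, _hm⟩ := mem_W.mp hw
            rw [Y_cons3, h1, h2]; ring
          have IHc := IH (m-1) (by omega) a b (c-1) (by omega)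
          rw [Finset.sum_congr rfl e, sum_poly4, IHc.1, IHc.2.1, IHc.2.2.1, IHc.2.2.2.1, IHc.2.2.2.2]
          rw [Nn_ratio3 a b hc, Nat.cast_sub (by omega : 1 ≤ c), Nat.cast_one]
          ring
      rw [hA, hB, hC, ← add_div, ← add_div, div_eq_iff hs]
      linear_combination (-(Nn a b c)) * star4 (a:ℚ) (b:ℚ) (c:ℚ)

set_option maxHeartbeats 4000000 in
lemma final_id (v : ℚ) :
    v^4 * P4 v v v + (-2*v^6) * P3 v v v + ((3/2)*v^8) * P2 v v v
      + (-(1/2)*v^10) * P1 v v v + v^12/16 = v^7 * (21*v - 16)/80 := by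
  simp only [P1, P2, P3, P4]; ring

end GepAux

open GepAux in
theorem gep_words_fourth_central_moment (n : ℕ) (hn : 1 ≤ n) :
    (∑ w ∈ W n n n, ((gep w : ℚ) - (n : ℚ) ^ 3 / 2) ^ 4) / ((W n n n).card : ℚ) =
      (n : ℚ) ^ 7 * (21 * (n : ℚ) - 16) / 80 := by
  obtain ⟨hcard, h1, h2, h3, h4⟩ := master (n + n + n) n n n rfl
  have key : ∀ w ∈ W n n n, ((gep w : ℚ) - (n : ℚ) ^ 3 / 2) ^ 4
      = (n:ℚ)^4 * Y w ^ 4 + (-2*(n:ℚ)^6) * Y w ^ 3 + ((3/2)*(n:ℚ)^8) * Y w ^ 2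
        + (-(1/2)*(n:ℚ)^10) * Y w + ((n:ℚ)^12/16) := by
    intro w hw
    obtain ⟨hc1, hc2, hc3, hm⟩ := mem_W.mp hw
    have hg := gep_linear hm
    rw [hc1, hc2, hc3] at hg
    have hq : (gep w : ℚ) = (n:ℚ) * (I21 w : ℚ) + (n:ℚ) * (I32 w : ℚ) - (n:ℚ) * (I31 w : ℚ) := by
      exact_mod_cast hg
    rw [hq, Y]
    ring
  rw [Finset.sum_congr rfl key, sum_poly4, h1, h2, h3, h4, hcard,
    div_eq_iff (Nn_ne_zero n n n)]
  linear_combination (Nn n n n) * final_id (n:ℚ)
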